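/- Fix α ∈ (1,2). The series f_α(β) = ∑_{n=0}^∞ (−1)^n β^n / ((n − α)·n!) converges for every β ≥ 0 and defines a continuous, strictly increasing function on [0,∞), with f_α(0) = −1/α < 0 and f_α(1) > 0. Consequently, the equation ∑_{n=0}^∞ (−1)^n β^n / ((n − α)·n!) = 0 has a unique solution β_α in (0,∞), and moreover β_α ∈ (0,1). -/

import Mathlib

open MeasureTheory Real Set

/-- The series `f_α(β) = ∑_{n=0}^∞ (−1)^n β^n / ((n − α)·n!)`. -/
noncomputable def stableSeries (α β : ℝ) : ℝ :=
  ∑' n : ℕ, (-1 : ℝ) ^ n * β ^ n / (((n : ℝ) - α) * (n.factorial : ℝ))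

namespace StableAux

variable {α : ℝ}

lemma abs_sub_ge (hα1 : 1 < α) (hα2 : α < 2) (n : ℕ) :
    min (α - 1) (2 - α) ≤ |(n : ℝ) - α| := by
  rcases n with _ | _ | n
  · rw [show ((0:ℕ):ℝ) - α = -α by push_cast; ring, abs_neg, abs_of_nonneg (by linarith)]
    exact le_trans (min_le_left _ _) (by linarith)
  · rw [show ((1:ℕ):ℝ) - α = -(α - 1) by push_cast; ring, abs_neg,
      abs_of_nonneg (by linarith)]
    exact min_le_left _ _
  · have h2 : (2:ℝ) ≤ ((n + 2 : ℕ) : ℝ) := by push_cast; linarith [Nat.cast_nonneg (α := ℝ) n]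
    rw [abs_of_nonneg (by linarith)]
    exact le_trans (min_le_right _ _) (by linarith)

lemma term_norm_le (hα1 : 1 < α) (hα2 : α < 2) (β : ℝ) (n : ℕ) :
    ‖(-1 : ℝ) ^ n * β ^ n / (((n : ℝ) - α) * (n.factorial : ℝ))‖ ≤
      |β| ^ n / (n.factorial : ℝ) * (min (α - 1) (2 - α))⁻¹ := by
  have hd : 0 < min (α - 1) (2 - α) := lt_min (by linarith) (by linarith)
  have hfac : (0:ℝ) < (n.factorial : ℝ) := by exact_mod_cast n.factorial_pos
  have key := abs_sub_ge hα1 hα2 n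
  rw [Real.norm_eq_abs, abs_div, abs_mul, abs_mul, abs_pow, abs_pow, abs_neg, abs_one,
    one_pow, one_mul, abs_of_nonneg hfac.le]
  calc |β| ^ n / (|(n : ℝ) - α| * (n.factorial : ℝ))
      ≤ |β| ^ n / (min (α - 1) (2 - α) * (n.factorial : ℝ)) := by
        apply div_le_div_of_nonneg_left (by positivity) (by positivity)
        exact mul_le_mul_of_nonneg_right key hfac.le
    _ = |β| ^ n / (n.factorial : ℝ) * (min (α - 1) (2 - α))⁻¹ := by
        rw [mul_comm, ← div_div, div_eq_mul_inv]

lemma summable_aux (hα1 : 1 < α) (hα2 : α < 2) (β : ℝ) :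
    Summable (fun n : ℕ => (-1 : ℝ) ^ n * β ^ n / (((n : ℝ) - α) * (n.factorial : ℝ))) := by
  apply Summable.of_norm
  exact Summable.of_nonneg_of_le (fun n => norm_nonneg _) (term_norm_le hα1 hα2 β)
    ((Real.summable_pow_div_factorial |β|).mul_right _)

lemma exp_part_nonneg {x : ℝ} (hx : 0 ≤ x) : 0 ≤ Real.exp (-x) - 1 + x := by
  have := Real.add_one_le_exp (-x)
  linarith

lemma exp_part_le_sq {x : ℝ} (hx : 0 ≤ x) : Real.exp (-x) - 1 + x ≤ x ^ 2 := by
  have h1 : Real.exp (-x) * Real.exp x = 1 := by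
    rw [← Real.exp_add]; simp
  have h2 := Real.add_one_le_exp x
  have h3 := Real.exp_pos (-x)
  nlinarith [mul_nonneg (mul_nonneg hx hx) hx, sq_nonneg (x - 1)]

lemma exp_part_mono {a b : ℝ} (ha : 0 ≤ a) (hab : a ≤ b) :
    Real.exp (-a) + a ≤ Real.exp (-b) + b := by
  have h1 : Real.exp (-b) = Real.exp (-a) * Real.exp (a - b) := by
    rw [← Real.exp_add]; ring_nf
  have h2 := Real.add_one_le_exp (a - b)
  have h3 := Real.exp_pos (-a)
  have h4 : Real.exp (-a) ≤ 1 := Real.exp_le_one_iff.mpr (by linarith)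
  nlinarith

/-- the integrand -/
noncomputable def G (α β t : ℝ) : ℝ := t ^ (-α - 1) * (Real.exp (-(β * t)) - 1 + β * t)

lemma G_nonneg (β : ℝ) (hβ : 0 ≤ β) {t : ℝ} (ht : t ∈ Ioc (0:ℝ) 1) : 0 ≤ G α β t :=
  mul_nonneg (Real.rpow_nonneg ht.1.le _) (exp_part_nonneg (mul_nonneg hβ ht.1.le))

lemma G_continuousOn (β : ℝ) : ContinuousOn (G α β) (Ioc (0:ℝ) 1) := by
  apply ContinuousOn.mul
  · exact ContinuousOn.rpow_const continuousOn_id (fun t ht => Or.inl (ne_of_gt ht.1))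
  · fun_prop

lemma rpow_integrableOn {r : ℝ} (hr : -1 < r) :
    IntegrableOn (fun t : ℝ => t ^ r) (Ioc (0:ℝ) 1) := by
  rw [← intervalIntegrable_iff_integrableOn_Ioc_of_le zero_le_one]
  exact intervalIntegral.intervalIntegrable_rpow' hr

lemma rpow_integral (hα2 : α < 2) (m : ℕ) :
    ∫ t in Ioc (0:ℝ) 1, t ^ ((m : ℝ) + 1 - α) = ((m : ℝ) + 2 - α)⁻¹ := by
  have hm : (0:ℝ) ≤ (m:ℝ) := Nat.cast_nonneg m
  have hr : (-1 : ℝ) < (m : ℝ) + 1 - α := by linarith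
  have hne : (m : ℝ) + 1 - α + 1 ≠ 0 := by intro h; nlinarith
  rw [← intervalIntegral.integral_of_le zero_le_one, integral_rpow (Or.inl hr),
    Real.one_rpow, Real.zero_rpow hne]
  rw [show (m : ℝ) + 1 - α + 1 = (m : ℝ) + 2 - α by ring]
  ring

lemma G_integrableOn (hα1 : 1 < α) (hα2 : α < 2) (β : ℝ) (hβ : 0 ≤ β) :
    IntegrableOn (G α β) (Ioc (0:ℝ) 1) := by
  have hdom : IntegrableOn (fun t : ℝ => β ^ 2 * t ^ (1 - α)) (Ioc (0:ℝ) 1) :=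
    (rpow_integrableOn (by linarith)).const_mul _
  apply Integrable.mono' hdom
    ((G_continuousOn β).aestronglyMeasurable measurableSet_Ioc)
  rw [ae_restrict_iff' measurableSet_Ioc]
  filter_upwards with t ht
  rw [Real.norm_eq_abs, abs_of_nonneg (G_nonneg β hβ ht)]
  have ht0 := ht.1
  have hle : Real.exp (-(β * t)) - 1 + β * t ≤ (β * t) ^ 2 :=
    exp_part_le_sq (mul_nonneg hβ ht0.le)
  calc G α β t ≤ t ^ (-α - 1) * (β * t) ^ 2 :=
        mul_le_mul_of_nonneg_left hle (Real.rpow_nonneg ht0.le _)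
    _ = β ^ 2 * t ^ (1 - α) := by
        rw [mul_pow, ← Real.rpow_natCast t 2,
          show (1:ℝ) - α = (-α - 1) + ((2:ℕ):ℝ) by push_cast; ring,
          Real.rpow_add ht0]
        ring

/-- The termwise functions whose sum is `G`. -/
noncomputable def F (α β : ℝ) (m : ℕ) (t : ℝ) : ℝ :=
  ((-1 : ℝ) ^ (m + 2) * β ^ (m + 2) / (((m + 2).factorial : ℕ) : ℝ)) * t ^ ((m : ℝ) + 1 - α)

lemma F_integrable (hα2 : α < 2) (β : ℝ) (m : ℕ) :
    IntegrableOn (F α β m) (Ioc (0:ℝ) 1) := by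
  apply Integrable.const_mul
  apply rpow_integrableOn
  have : (0:ℝ) ≤ (m:ℝ) := Nat.cast_nonneg m
  linarith

lemma F_integral (hα2 : α < 2) (β : ℝ) (m : ℕ) :
    ∫ t in Ioc (0:ℝ) 1, F α β m t =
      (-1 : ℝ) ^ (m + 2) * β ^ (m + 2) /
        ((((m + 2 : ℕ) : ℝ) - α) * (((m + 2).factorial : ℕ) : ℝ)) := by
  have hm : (0:ℝ) ≤ (m:ℝ) := Nat.cast_nonneg m
  have hfac : (0:ℝ) < (((m + 2).factorial : ℕ) : ℝ) := by exact_mod_cast (m+2).factorial_pos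
  have hden : ((m:ℝ) + 2 - α) ≠ 0 := by intro h; nlinarith
  simp only [F]
  rw [integral_const_mul, rpow_integral hα2 m]
  have hc : ((m + 2 : ℕ) : ℝ) = (m : ℝ) + 2 := by push_cast; ring
  rw [hc, ← div_eq_mul_inv, div_div, mul_comm ((((m+2).factorial : ℕ)):ℝ)]

lemma F_norm_integral (hα2 : α < 2) (β : ℝ) (hβ : 0 ≤ β) (m : ℕ) :
    ∫ t in Ioc (0:ℝ) 1, ‖F α β m t‖ =
      β ^ (m + 2) / (((m + 2).factorial : ℕ) : ℝ) * ((m : ℝ) + 2 - α)⁻¹ := by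
  have hfac : (0:ℝ) < (((m + 2).factorial : ℕ) : ℝ) := by exact_mod_cast (m+2).factorial_pos
  have h1 : ∫ t in Ioc (0:ℝ) 1, ‖F α β m t‖ =
      ∫ t in Ioc (0:ℝ) 1, (β ^ (m + 2) / (((m + 2).factorial : ℕ) : ℝ)) * t ^ ((m : ℝ) + 1 - α) := by
    refine setIntegral_congr_fun measurableSet_Ioc (fun t ht => ?_)
    simp only [F]
    rw [Real.norm_eq_abs, abs_mul, abs_div, abs_mul, abs_pow, abs_pow, abs_neg, abs_one,
      one_pow, one_mul, abs_of_nonneg hβ, abs_of_nonneg hfac.le,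
      abs_of_nonneg (Real.rpow_nonneg ht.1.le _)]
  rw [h1, integral_const_mul, rpow_integral hα2 m]

lemma F_tsum (β : ℝ) {t : ℝ} (ht : t ∈ Ioc (0:ℝ) 1) :
    ∑' m : ℕ, F α β m t = G α β t := by
  have ht0 := ht.1
  set x : ℝ := -(β * t) with hx
  have hsum : Summable (fun n : ℕ => x ^ n / (n.factorial : ℝ)) :=
    NormedSpace.expSeries_div_summable x
  have hexp : Real.exp x = ∑' n : ℕ, x ^ n / (n.factorial : ℝ) := by
    rw [Real.exp_eq_exp_ℝ, NormedSpace.exp_eq_tsum_div]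
  have hsplit : ∑' m : ℕ, x ^ (m + 2) / (((m + 2).factorial : ℕ) : ℝ)
      = Real.exp x - 1 - x := by
    have h0 : ∑' n : ℕ, x ^ n / (n.factorial : ℝ)
        = x ^ 0 / ((Nat.factorial 0 : ℕ) : ℝ)
          + ∑' n : ℕ, x ^ (n + 1) / (((n + 1).factorial : ℕ) : ℝ) :=
      Summable.tsum_eq_zero_add hsum
    have h1 : ∑' n : ℕ, x ^ (n + 1) / (((n + 1).factorial : ℕ) : ℝ)
        = x ^ 1 / ((Nat.factorial 1 : ℕ) : ℝ)
          + ∑' n : ℕ, x ^ (n + 1 + 1) / (((n + 1 + 1).factorial : ℕ) : ℝ) :=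
      Summable.tsum_eq_zero_add ((summable_nat_add_iff 1).2 hsum)
    have h2 : ∀ n : ℕ, x ^ (n + 1 + 1) / (((n + 1 + 1).factorial : ℕ) : ℝ)
        = x ^ (n + 2) / (((n + 2).factorial : ℕ) : ℝ) := fun n => rfl
    rw [hexp, h0, h1]
    simp only [h2, pow_zero, pow_one, Nat.factorial_zero, Nat.factorial_one, Nat.cast_one]
    ring
  have hterm : ∀ m : ℕ, F α β m t = t ^ (-α - 1) * (x ^ (m + 2) / (((m + 2).factorial : ℕ) : ℝ)) := by
    intro m
    simp only [F, hx]
    have hxpow : (-(β * t)) ^ (m + 2) = (-1 : ℝ) ^ (m + 2) * β ^ (m + 2) * t ^ (m + 2) := by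
      rw [neg_mul_eq_neg_mul, mul_pow, neg_pow]
      try ring
    have htpow : t ^ ((m : ℝ) + 1 - α) = t ^ (-α - 1) * (t : ℝ) ^ (m + 2 : ℕ) := by
      rw [← Real.rpow_natCast t (m + 2), ← Real.rpow_add ht0]
      congr 1
      push_cast; ring
    rw [hxpow, htpow]
    try ring
  calc ∑' m : ℕ, F α β m t
      = ∑' m : ℕ, t ^ (-α - 1) * (x ^ (m + 2) / (((m + 2).factorial : ℕ) : ℝ)) := by
        exact tsum_congr hterm
    _ = t ^ (-α - 1) * ∑' m : ℕ, x ^ (m + 2) / (((m + 2).factorial : ℕ) : ℝ) := tsum_mul_left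
    _ = G α β t := by
        rw [hsplit, G, hx]
        ring_nf

lemma integral_G (hα1 : 1 < α) (hα2 : α < 2) (β : ℝ) (hβ : 0 ≤ β) :
    ∫ t in Ioc (0:ℝ) 1, G α β t =
      ∑' m : ℕ, (-1 : ℝ) ^ (m + 2) * β ^ (m + 2) /
        ((((m + 2 : ℕ) : ℝ) - α) * (((m + 2).factorial : ℕ) : ℝ)) := by
  have hsummable : Summable (fun m : ℕ => ∫ t in Ioc (0:ℝ) 1, ‖F α β m t‖) := by
    refine Summable.of_nonneg_of_le
      (fun m => integral_nonneg (fun t => norm_nonneg _)) (fun m => ?_)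
      ((Real.summable_pow_div_factorial β).mul_left (β ^ 2 * (2 - α)⁻¹))
    rw [F_norm_integral hα2 β hβ m]
    have hm : (0:ℝ) ≤ (m:ℝ) := Nat.cast_nonneg m
    have h2α : (0:ℝ) < 2 - α := by linarith
    have hinv : ((m : ℝ) + 2 - α)⁻¹ ≤ (2 - α)⁻¹ :=
      inv_anti₀ h2α (by linarith)
    have hfacm : (0:ℝ) < (m.factorial : ℝ) := by exact_mod_cast m.factorial_pos
    have hfacle : (m.factorial : ℝ) ≤ (((m + 2).factorial : ℕ) : ℝ) := by
      exact_mod_cast Nat.factorial_le (by omega)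
    have hb1 : β ^ (m + 2) / (((m + 2).factorial : ℕ) : ℝ) ≤ β ^ 2 * (β ^ m / (m.factorial : ℝ)) := by
      rw [pow_add, div_le_iff₀ (by positivity)]
      calc β ^ m * β ^ 2 = β ^ 2 * β ^ m := by ring
        _ ≤ β ^ 2 * (β ^ m / ↑m.factorial * ↑(m + 2).factorial) := by
            apply mul_le_mul_of_nonneg_left _ (by positivity)
            rw [div_mul_eq_mul_div, le_div_iff₀ hfacm]
            exact mul_le_mul_of_nonneg_left hfacle (by positivity)
        _ = β ^ 2 * (β ^ m / ↑m.factorial) * ↑(m + 2).factorial := by ring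
    calc β ^ (m + 2) / (((m + 2).factorial : ℕ) : ℝ) * ((m : ℝ) + 2 - α)⁻¹
        ≤ β ^ 2 * (β ^ m / (m.factorial : ℝ)) * (2 - α)⁻¹ := by
          exact mul_le_mul hb1 hinv (inv_nonneg.mpr (by linarith)) (by positivity)
      _ = β ^ 2 * (2 - α)⁻¹ * (β ^ m / (m.factorial : ℝ)) := by ring
  have hswap := integral_tsum_of_summable_integral_norm
    (F := F α β) (μ := volume.restrict (Ioc (0:ℝ) 1))
    (fun m => F_integrable hα2 β m) hsummable
  have hcong : ∫ t in Ioc (0:ℝ) 1, (∑' m : ℕ, F α β m t) = ∫ t in Ioc (0:ℝ) 1, G α β t :=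
    setIntegral_congr_fun measurableSet_Ioc (fun t ht => F_tsum β ht)
  rw [← hcong, ← hswap]
  exact tsum_congr (fun m => F_integral hα2 β m)

lemma series_split (hα1 : 1 < α) (hα2 : α < 2) (β : ℝ) :
    stableSeries α β = -(1 / α) + β / (α - 1) +
      ∑' m : ℕ, (-1 : ℝ) ^ (m + 2) * β ^ (m + 2) /
        ((((m + 2 : ℕ) : ℝ) - α) * (((m + 2).factorial : ℕ) : ℝ)) := by
  have hs := summable_aux hα1 hα2 β
  have hα0 : α ≠ 0 := by linarith
  have hα1' : α - 1 ≠ 0 := by intro h; apply absurd hα1; linarith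
  rw [stableSeries, Summable.tsum_eq_zero_add hs, Summable.tsum_eq_zero_add ((summable_nat_add_iff 1).2 hs)]
  have e0 : (-1 : ℝ) ^ 0 * β ^ 0 / ((((0:ℕ):ℝ) - α) * ((Nat.factorial 0 : ℕ) : ℝ)) = -(1/α) := by
    simp
  have e1 : (-1 : ℝ) ^ 1 * β ^ 1 / ((((1:ℕ):ℝ) - α) * ((Nat.factorial 1 : ℕ) : ℝ)) = β / (α - 1) := by
    simp only [pow_one, Nat.factorial_one, Nat.cast_one, mul_one]
    rw [div_eq_div_iff (by intro h; apply hα1'; push_cast at h ⊢; linarith) hα1']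
    push_cast
    ring
  rw [← add_assoc]
  congr 1
  exact congrArg₂ (· + ·) e0 e1

lemma stable_rep (hα1 : 1 < α) (hα2 : α < 2) (β : ℝ) (hβ : 0 ≤ β) :
    stableSeries α β = -(1 / α) + β / (α - 1) + ∫ t in Ioc (0:ℝ) 1, G α β t := by
  rw [series_split hα1 hα2 β, integral_G hα1 hα2 β hβ]

lemma continuousOn_stable (hα1 : 1 < α) (hα2 : α < 2) :
    ContinuousOn (stableSeries α) (Ici (0:ℝ)) := by
  intro x hx
  have hx0 : (0:ℝ) ≤ x := hx
  have hR : ContinuousOn (stableSeries α) (Icc (0:ℝ) (x+1)) := by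
    have : ContinuousOn
        (fun β : ℝ => ∑' n : ℕ, (-1 : ℝ) ^ n * β ^ n / (((n : ℝ) - α) * (n.factorial : ℝ)))
        (Icc (0:ℝ) (x+1)) := by
      apply continuousOn_tsum
        (u := fun n : ℕ => (x+1) ^ n / (n.factorial : ℝ) * (min (α - 1) (2 - α))⁻¹)
      · intro i
        apply Continuous.continuousOn
        fun_prop
      · exact (Real.summable_pow_div_factorial (x+1)).mul_right _
      · intro n β hβ
        refine le_trans (term_norm_le hα1 hα2 β n) ?_
        have hd : 0 < min (α - 1) (2 - α) := lt_min (by linarith) (by linarith)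
        have hfac : (0:ℝ) < (n.factorial : ℝ) := by exact_mod_cast n.factorial_pos
        have habs : |β| ≤ x + 1 := by
          rw [abs_of_nonneg hβ.1]; exact hβ.2
        refine mul_le_mul_of_nonneg_right ?_ (inv_nonneg.mpr hd.le)
        have hp : |β| ^ n ≤ (x+1) ^ n := pow_le_pow_left₀ (abs_nonneg β) habs n
        exact div_le_div_of_nonneg_right hp hfac.le
    exact this
  have hmem : Icc (0:ℝ) (x+1) ∈ nhdsWithin x (Ici (0:ℝ)) := by
    rw [mem_nhdsWithin]
    exact ⟨Iio (x+1), isOpen_Iio, by simp only [mem_Iio]; linarith, fun y hy => ⟨hy.2, hy.1.le⟩⟩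
  exact (hR x ⟨hx0, by linarith⟩).mono_of_mem_nhdsWithin hmem

lemma strictMonoOn_stable (hα1 : 1 < α) (hα2 : α < 2) :
    StrictMonoOn (stableSeries α) (Ici (0:ℝ)) := by
  intro a ha b hb hab
  have ha0 : (0:ℝ) ≤ a := ha
  have hb0 : (0:ℝ) ≤ b := hb
  rw [stable_rep hα1 hα2 a ha0, stable_rep hα1 hα2 b hb0]
  have hI : ∫ t in Ioc (0:ℝ) 1, G α a t ≤ ∫ t in Ioc (0:ℝ) 1, G α b t := by
    apply setIntegral_mono_on (G_integrableOn hα1 hα2 a ha0) (G_integrableOn hα1 hα2 b hb0)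
      measurableSet_Ioc
    intro t ht
    unfold G
    apply mul_le_mul_of_nonneg_left _ (Real.rpow_nonneg ht.1.le _)
    have := exp_part_mono (a := a*t) (b := b*t) (mul_nonneg ha0 ht.1.le)
      (mul_le_mul_of_nonneg_right hab.le ht.1.le)
    linarith
  have h1 : a / (α - 1) < b / (α - 1) := by
    have hpos : (0:ℝ) < α - 1 := by linarith
    exact (div_lt_div_iff_of_pos_right hpos).mpr hab
  linarith

lemma stable_zero (hα1 : 1 < α) (hα2 : α < 2) : stableSeries α 0 = -(1/α) := by
  rw [stable_rep hα1 hα2 0 le_rfl]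
  have hG : ∫ t in Ioc (0:ℝ) 1, G α 0 t = 0 := by
    simp [G]
  rw [hG]
  norm_num

lemma stable_one_pos (hα1 : 1 < α) (hα2 : α < 2) : 0 < stableSeries α 1 := by
  rw [stable_rep hα1 hα2 1 zero_le_one]
  have hI : 0 ≤ ∫ t in Ioc (0:ℝ) 1, G α 1 t :=
    setIntegral_nonneg measurableSet_Ioc (fun t ht => G_nonneg 1 zero_le_one ht)
  have h1 : 1/α < 1/(α-1) := by
    apply one_div_lt_one_div_of_lt (by linarith) (by linarith)
  linarith

end StableAux

theorem stableSeries_root (α : ℝ) (hα : α ∈ Set.Ioo (1:ℝ) 2) :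
    (∀ β : ℝ, 0 ≤ β →
      Summable (fun n : ℕ => (-1 : ℝ) ^ n * β ^ n / (((n : ℝ) - α) * (n.factorial : ℝ)))) ∧
    ContinuousOn (stableSeries α) (Set.Ici 0) ∧
    StrictMonoOn (stableSeries α) (Set.Ici 0) ∧
    stableSeries α 0 = -(1 / α) ∧
    stableSeries α 0 < 0 ∧
    0 < stableSeries α 1 ∧
    (∃! β : ℝ, 0 < β ∧ stableSeries α β = 0) ∧
    (∀ β : ℝ, 0 < β → stableSeries α β = 0 → β ∈ Set.Ioo (0:ℝ) 1) := by
  obtain ⟨hα1, hα2⟩ := hα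
  have hcont := StableAux.continuousOn_stable hα1 hα2
  have hmono := StableAux.strictMonoOn_stable hα1 hα2
  have hzero := StableAux.stable_zero hα1 hα2
  have hneg : stableSeries α 0 < 0 := by
    rw [hzero]
    have : 0 < (1:ℝ)/α := div_pos one_pos (by linarith)
    linarith
  have hpos := StableAux.stable_one_pos hα1 hα2
  have hroot1 : ∀ β : ℝ, 0 < β → stableSeries α β = 0 → β ∈ Set.Ioo (0:ℝ) 1 := by
    intro β hβ hr
    refine ⟨hβ, ?_⟩
    by_contra h
    push_neg at h
    have h1β : stableSeries α 1 ≤ stableSeries α β :=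
      hmono.monotoneOn (Set.mem_Ici.mpr zero_le_one)
        (Set.mem_Ici.mpr (le_trans zero_le_one h)) h
    rw [hr] at h1β
    linarith
  refine ⟨fun β _ => StableAux.summable_aux hα1 hα2 β, hcont, hmono, hzero, hneg, hpos, ?_, hroot1⟩
  have hivt := intermediate_value_Ioo (zero_le_one)
    (hcont.mono (fun y hy => hy.1 : Set.Icc (0:ℝ) 1 ⊆ Set.Ici 0))
  obtain ⟨β₀, hβ₀mem, hβ₀⟩ := hivt ⟨hneg, hpos⟩
  refine ⟨β₀, ⟨hβ₀mem.1, hβ₀⟩, ?_⟩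
  intro y hy
  exact hmono.injOn (le_of_lt hy.1) (le_of_lt hβ₀mem.1) (by rw [hy.2, hβ₀])
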